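/- The distribution π_ω = ξ(1-ξ)^{β_ω} p_B(α_ω+1) (with α_ω = ω mod m, β_ω = ⌊ω/m⌋) satisfies the balance equations of the IRSA age Markov chain: π_ω = ξ·p_B(ω+1) for 0 ≤ ω < m, and π_ω = (1-ξ)·π_{ω-m} for ω ≥ m. -/
import Mathlib

/-- The distribution π_ω = ξ(1-ξ)^{β_ω} p_B(α_ω+1) satisfies the balance equations
of the IRSA age Markov chain. -/
theorem stationary_balance (m : ℕ) (hm : 1 ≤ m) (ξ : ℝ) (hξ0 : 0 < ξ) (hξ1 : ξ < 1)
    (pB : ℕ → ℝ)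
    (π : ℕ → ℝ) (hπ : ∀ ω, π ω = ξ * (1 - ξ) ^ (ω / m) * pB (ω % m + 1)) :
    (∀ ω, ω < m → π ω = ξ * pB (ω + 1)) ∧
    (∀ ω, m ≤ ω → π ω = (1 - ξ) * π (ω - m)) := by
  constructor
  · intro ω hω
    rw [hπ, Nat.div_eq_of_lt hω, Nat.mod_eq_of_lt hω, pow_zero, mul_one]
  · intro ω hω
    rw [hπ, hπ]
    have h3 : 1 ≤ ω / m := (Nat.one_le_div_iff (by omega)).mpr hω
    obtain ⟨k, hk⟩ : ∃ k, ω / m = k + 1 := ⟨ω / m - 1, by omega⟩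
    have h1 : (ω - m) / m = k := by
      have e1 : ω - m + m = ω := by omega
      have e2 := Nat.add_div_right (ω - m) (by omega : 0 < m)
      rw [e1] at e2
      omega
    have h2 : (ω - m) % m = ω % m := by
      conv_rhs => rw [← Nat.sub_add_cancel hω]
      rw [Nat.add_mod_right]
    rw [h1, h2, hk, pow_succ]
    ring
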